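/- For every prime ℓ ≥ 317, the number of residues a ∈ 𝔽_ℓ failing the condition that 1+a² is not congruent to any of 0, ±(1−a²), ±(a+a³), ±(a−a³), ±(1+a³), ±(1−a³), ±(a+a²), ±(a−a²) mod ℓ is at most 37; consequently, since φ(ℓ−1) > (ℓ−1)^{log 2/log 3} > 37 for ℓ ≥ 317, there exists a ∈ ℤ_ℓ^× of multiplicative order ℓ−1 satisfying all these non-congruences. -/

import Mathlib

open Polynomial Nat

/-- `a` satisfies the non-congruences \eqref{eqn:notequiv}: `1 + a²` is not
congruent to `0, ±(1−a²), ±(a+a³), ±(a−a³), ±(1+a³), ±(1−a³), ±(a+a²), ±(a−a²)`. -/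
def GoodResidue (ℓ : ℕ) (b : ZMod ℓ) : Prop :=
  1 + b ^ 2 ≠ 0 ∧
  1 + b ^ 2 ≠ 1 - b ^ 2 ∧ 1 + b ^ 2 ≠ -(1 - b ^ 2) ∧
  1 + b ^ 2 ≠ b + b ^ 3 ∧ 1 + b ^ 2 ≠ -(b + b ^ 3) ∧
  1 + b ^ 2 ≠ b - b ^ 3 ∧ 1 + b ^ 2 ≠ -(b - b ^ 3) ∧
  1 + b ^ 2 ≠ 1 + b ^ 3 ∧ 1 + b ^ 2 ≠ -(1 + b ^ 3) ∧
  1 + b ^ 2 ≠ 1 - b ^ 3 ∧ 1 + b ^ 2 ≠ -(1 - b ^ 3) ∧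
  1 + b ^ 2 ≠ b + b ^ 2 ∧ 1 + b ^ 2 ≠ -(b + b ^ 2) ∧
  1 + b ^ 2 ≠ b - b ^ 2 ∧ 1 + b ^ 2 ≠ -(b - b ^ 2)


open Nat

lemma pm14 {p : ℕ} (hp5 : 5 ≤ p) : p ^ 3 ≤ (p - 1) ^ 4 := by
  obtain ⟨q, rfl⟩ := Nat.exists_eq_add_of_le hp5
  have h : 5 + q - 1 = 4 + q := by omega
  rw [h]; nlinarith [sq_nonneg q]

lemma key_pk {p k : ℕ} (hk : 0 < k) (hp5 : 5 ≤ p) :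
    (p ^ k) ^ 3 ≤ (p ^ (k - 1) * (p - 1)) ^ 4 := by
  obtain ⟨j, rfl⟩ := Nat.exists_eq_add_of_le hk
  have h1 : 1 + j - 1 = j := by omega
  rw [h1]
  calc (p ^ (1 + j)) ^ 3 = p ^ (3 * j + 3) := by ring
    _ ≤ p ^ (4 * j + 3) := Nat.pow_le_pow_right (by omega) (by omega)
    _ = (p ^ j) ^ 4 * p ^ 3 := by ring
    _ ≤ (p ^ j) ^ 4 * (p - 1) ^ 4 := Nat.mul_le_mul_left _ (pm14 hp5)
    _ = (p ^ j * (p - 1)) ^ 4 := by rw [mul_pow]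

lemma prime_ge5 {p : ℕ} (hp : p.Prime) (h2 : p ≠ 2) (h3 : p ≠ 3) : 5 ≤ p := by
  have := hp.two_le
  have h4 : p ≠ 4 := by rintro rfl; norm_num at hp
  omega

lemma tot_coprime6 : ∀ n : ℕ, n.Coprime 6 → n ^ 3 ≤ n.totient ^ 4 := by
  refine Nat.recOnPrimePow ?_ ?_ ?_
  · intro h; simp [Nat.Coprime] at h
  · intro _; simp
  · intro a p k hp hpa hk ih hcop
    have ha6 : a.Coprime 6 := Nat.Coprime.coprime_dvd_left (dvd_mul_left _ _) hcop
    have hpd : ¬ p ∣ 6 := (Nat.Prime.coprime_iff_not_dvd hp).mp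
      (Nat.Coprime.coprime_dvd_left (dvd_mul_of_dvd_left (dvd_pow_self p hk.ne') a) hcop)
    have hp5 : 5 ≤ p := prime_ge5 hp (by rintro rfl; exact hpd (by norm_num))
      (by rintro rfl; exact hpd (by norm_num))
    have hcp : (p ^ k).Coprime a := Nat.Coprime.pow_left k (hp.coprime_iff_not_dvd.mpr hpa)
    rw [Nat.totient_mul hcp, Nat.totient_prime_pow hp hk]
    calc (p ^ k * a) ^ 3 = (p ^ k) ^ 3 * a ^ 3 := by ring
      _ ≤ (p ^ (k - 1) * (p - 1)) ^ 4 * a.totient ^ 4 :=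
          Nat.mul_le_mul (key_pk hk hp5) (ih ha6)
      _ = (p ^ (k - 1) * (p - 1) * a.totient) ^ 4 := by ring

lemma tot_odd : ∀ n : ℕ, Odd n → 16 * n ^ 3 ≤ 27 * n.totient ^ 4 := by
  refine Nat.recOnPrimePow ?_ ?_ ?_
  · intro h; simp at h
  · intro _; simp
  · intro a p k hp hpa hk ih hodd
    have hpodd : p ≠ 2 := by
      rintro rfl
      exact (Nat.not_odd_iff_even.mpr ((Nat.even_pow.mpr ⟨even_two, hk.ne'⟩).mul_right a)) hodd
    have haodd : Odd a := by
      rcases Nat.even_or_odd a with h | h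
      · exact absurd hodd (Nat.not_odd_iff_even.mpr (h.mul_left _))
      · exact h
    have hcp : (p ^ k).Coprime a := Nat.Coprime.pow_left k (hp.coprime_iff_not_dvd.mpr hpa)
    rw [Nat.totient_mul hcp, Nat.totient_prime_pow hp hk]
    rcases eq_or_ne p 3 with rfl | hp3
    · have ha6 : a.Coprime 6 := by
        have h2 : a.Coprime 2 := haodd.coprime_two_right
        have h3 : a.Coprime 3 := Nat.coprime_comm.mp ((Nat.prime_three.coprime_iff_not_dvd).mpr hpa)
        have h6 : (6 : ℕ) = 2 * 3 := rfl
        rw [h6]; exact Nat.Coprime.mul_right h2 h3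
      obtain ⟨j, rfl⟩ := Nat.exists_eq_add_of_le hk
      have h1 : 1 + j - 1 = j := by omega
      rw [h1]
      calc 16 * (3 ^ (1 + j) * a) ^ 3 = 16 * 27 * 3 ^ (3 * j) * a ^ 3 := by ring
        _ ≤ 16 * 27 * 3 ^ (4 * j) * a ^ 3 := by
            have := Nat.pow_le_pow_right (show 1 ≤ 3 by omega) (show 3 * j ≤ 4 * j by omega)
            exact Nat.mul_le_mul_right _ (Nat.mul_le_mul_left _ this)
        _ ≤ 16 * 27 * 3 ^ (4 * j) * a.totient ^ 4 :=
            Nat.mul_le_mul_left _ (tot_coprime6 a ha6)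
        _ = 27 * (3 ^ j * (3 - 1) * a.totient) ^ 4 := by
            rw [mul_pow, mul_pow]; norm_num; ring
    · have hp5 : 5 ≤ p := prime_ge5 hp hpodd hp3
      calc 16 * (p ^ k * a) ^ 3 = (p ^ k) ^ 3 * (16 * a ^ 3) := by ring
        _ ≤ (p ^ (k - 1) * (p - 1)) ^ 4 * (27 * a.totient ^ 4) :=
            Nat.mul_le_mul (key_pk hk hp5) (ih haodd)
        _ = 27 * (p ^ (k - 1) * (p - 1) * a.totient) ^ 4 := by ring

lemma tot_ge (n : ℕ) (hn : 316 ≤ n) : 38 ≤ n.totient := by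
  by_contra h
  push_neg at h
  have h37 : n.totient ≤ 37 := by omega
  -- general bound : 2 * n^3 ≤ 27 * φ(n)^4
  have main : ∀ m : ℕ, 0 < m → 2 * m ^ 3 ≤ 27 * m.totient ^ 4 := by
    intro m
    induction m using Nat.strong_induction_on with
    | _ m ih =>
      intro hm
      rcases Nat.even_or_odd m with he | ho
      · obtain ⟨c, rfl⟩ := he
        have hc : 0 < c := by omega
        rcases Nat.even_or_odd c with hce | hco
        · have h2c : Nat.totient (2 * c) = 2 * Nat.totient c := by
            exact Nat.totient_mul_of_prime_of_dvd Nat.prime_two hce.two_dvd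
          have ihc := ih c (by omega) hc
          rw [← two_mul, h2c]
          calc 2 * (2 * c) ^ 3 = 8 * (2 * c ^ 3) := by ring
            _ ≤ 8 * (27 * c.totient ^ 4) := Nat.mul_le_mul_left _ ihc
            _ ≤ 27 * (2 * c.totient) ^ 4 := by ring_nf; omega
        · have h2c : Nat.totient (2 * c) = Nat.totient c := by
            rw [Nat.totient_mul (hco.coprime_two_right.symm)]
            simp
          rw [← two_mul, h2c]
          have := tot_odd c hco
          calc 2 * (2 * c) ^ 3 = 16 * c ^ 3 := by ring
            _ ≤ 27 * c.totient ^ 4 := this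
      · have := tot_odd m ho
        omega
  have := main n (by omega)
  have h4 : n.totient ^ 4 ≤ 37 ^ 4 := Nat.pow_le_pow_left h37 4
  have h3 : 316 ^ 3 ≤ n ^ 3 := Nat.pow_le_pow_left hn 3
  omega

lemma ncard_le_of_poly {K : Type*} [Field K] {p : K[X]} {d : ℕ} (hd : p.degree = d)
    {S : Set K} (h : ∀ x ∈ S, p.eval x = 0) : S.ncard ≤ d := by
  classical
  have hp : p ≠ 0 := by rintro rfl; simp at hd
  have hsub : S ⊆ ↑p.roots.toFinset := by
    intro x hx
    simp only [Finset.coe_sort_coe, Multiset.mem_toFinset, Finset.mem_coe, mem_roots, hp,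
      ne_eq, not_false_iff, true_and, IsRoot.def]
    exact h x hx
  calc S.ncard ≤ (↑p.roots.toFinset : Set K).ncard :=
        Set.ncard_le_ncard hsub p.roots.toFinset.finite_toSet
    _ = p.roots.toFinset.card := Set.ncard_coe_finset _
    _ ≤ Multiset.card p.roots := Multiset.toFinset_card_le _
    _ ≤ p.natDegree := p.card_roots'
    _ = d := natDegree_eq_of_degree_eq_some hd

lemma bad_bound (ℓ : ℕ) [Fact ℓ.Prime] (hℓ : 317 ≤ ℓ) :
    {b : ZMod ℓ | ¬ GoodResidue ℓ b}.ncard ≤ 37 := by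
  have h2 : (2 : ZMod ℓ) ≠ 0 := by
    have : ((2 : ℕ) : ZMod ℓ) ≠ 0 := by
      rw [Ne, ZMod.natCast_eq_zero_iff]
      intro h
      have := Nat.le_of_dvd (by norm_num) h
      omega
    exact_mod_cast this
  set S1 : Set (ZMod ℓ) := {x | x ^ 2 + 1 = 0} with hS1
  set S2 : Set (ZMod ℓ) := {x | 2 * x ^ 2 = 0} with hS2
  set S4 : Set (ZMod ℓ) := {x | x ^ 3 - x ^ 2 + x - 1 = 0} with hS4
  set S5 : Set (ZMod ℓ) := {x | x ^ 3 + x ^ 2 + x + 1 = 0} with hS5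
  set S6 : Set (ZMod ℓ) := {x | x ^ 3 + x ^ 2 - x + 1 = 0} with hS6
  set S7 : Set (ZMod ℓ) := {x | x ^ 3 - x ^ 2 - x - 1 = 0} with hS7
  set S8 : Set (ZMod ℓ) := {x | x ^ 3 - x ^ 2 = 0} with hS8
  set S9 : Set (ZMod ℓ) := {x | x ^ 3 + x ^ 2 + 2 = 0} with hS9
  set S10 : Set (ZMod ℓ) := {x | x ^ 3 + x ^ 2 = 0} with hS10
  set S11 : Set (ZMod ℓ) := {x | x ^ 3 - x ^ 2 - 2 = 0} with hS11
  set S12 : Set (ZMod ℓ) := {x | x - 1 = 0} with hS12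
  set S13 : Set (ZMod ℓ) := {x | 2 * x ^ 2 + x + 1 = 0} with hS13
  set S14 : Set (ZMod ℓ) := {x | 2 * x ^ 2 - x + 1 = 0} with hS14
  set S15 : Set (ZMod ℓ) := {x | x + 1 = 0} with hS15
  have hsub : {b : ZMod ℓ | ¬ GoodResidue ℓ b} ⊆
      S1 ∪ S2 ∪ S4 ∪ S5 ∪ S6 ∪ S7 ∪ S8 ∪ S9 ∪ S10 ∪ S11 ∪ S12 ∪ S13 ∪ S14 ∪ S15 := by
    intro b hb
    by_contra hB
    simp only [Set.mem_union, not_or, hS1, hS2, hS4, hS5, hS6, hS7, hS8, hS9, hS10, hS11,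
      hS12, hS13, hS14, hS15, Set.mem_setOf_eq] at hB
    obtain ⟨⟨⟨⟨⟨⟨⟨⟨⟨⟨⟨⟨⟨n1, n2⟩, n4⟩, n5⟩, n6⟩, n7⟩, n8⟩, n9⟩, n10⟩, n11⟩, n12⟩, n13⟩, n14⟩, n15⟩ := hB
    apply hb
    refine ⟨fun h => n1 (by linear_combination h),
      fun h => n2 (by linear_combination h),
      fun h => h2 (by linear_combination h),
      fun h => n4 (by linear_combination -h),
      fun h => n5 (by linear_combination h),
      fun h => n6 (by linear_combination h),
      fun h => n7 (by linear_combination -h),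
      fun h => n8 (by linear_combination -h),
      fun h => n9 (by linear_combination h),
      fun h => n10 (by linear_combination h),
      fun h => n11 (by linear_combination -h),
      fun h => n12 (by linear_combination -h),
      fun h => n13 (by linear_combination h),
      fun h => n14 (by linear_combination h),
      fun h => n15 (by linear_combination h)⟩
  have c1 : S1.ncard ≤ 2 := ncard_le_of_poly (p := X ^ 2 + 1) (by compute_degree!)
    (fun x hx => by
      simp only [eval_mul, eval_add, eval_sub, eval_pow, eval_X, eval_C, eval_one, eval_ofNat]
      exact hx)
  have c2 : S2.ncard ≤ 2 := ncard_le_of_poly (p := (C 2) * X ^ 2)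
    (by compute_degree!) (fun x hx => by
      simp only [eval_mul, eval_add, eval_sub, eval_pow, eval_X, eval_C, eval_one, eval_ofNat]
      exact hx)
  have c4 : S4.ncard ≤ 3 := ncard_le_of_poly (p := X ^ 3 - X ^ 2 + X - 1) (by compute_degree!)
    (fun x hx => by
      simp only [eval_mul, eval_add, eval_sub, eval_pow, eval_X, eval_C, eval_one, eval_ofNat]
      exact hx)
  have c5 : S5.ncard ≤ 3 := ncard_le_of_poly (p := X ^ 3 + X ^ 2 + X + 1) (by compute_degree!)
    (fun x hx => by
      simp only [eval_mul, eval_add, eval_sub, eval_pow, eval_X, eval_C, eval_one, eval_ofNat]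
      exact hx)
  have c6 : S6.ncard ≤ 3 := ncard_le_of_poly (p := X ^ 3 + X ^ 2 - X + 1) (by compute_degree!)
    (fun x hx => by
      simp only [eval_mul, eval_add, eval_sub, eval_pow, eval_X, eval_C, eval_one, eval_ofNat]
      exact hx)
  have c7 : S7.ncard ≤ 3 := ncard_le_of_poly (p := X ^ 3 - X ^ 2 - X - 1) (by compute_degree!)
    (fun x hx => by
      simp only [eval_mul, eval_add, eval_sub, eval_pow, eval_X, eval_C, eval_one, eval_ofNat]
      exact hx)
  have c8 : S8.ncard ≤ 3 := ncard_le_of_poly (p := X ^ 3 - X ^ 2) (by compute_degree!)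
    (fun x hx => by
      simp only [eval_mul, eval_add, eval_sub, eval_pow, eval_X, eval_C, eval_one, eval_ofNat]
      exact hx)
  have c9 : S9.ncard ≤ 3 := ncard_le_of_poly (p := X ^ 3 + X ^ 2 + 2) (by compute_degree!)
    (fun x hx => by
      simp only [eval_mul, eval_add, eval_sub, eval_pow, eval_X, eval_C, eval_one, eval_ofNat]
      exact hx)
  have c10 : S10.ncard ≤ 3 := ncard_le_of_poly (p := X ^ 3 + X ^ 2) (by compute_degree!)
    (fun x hx => by
      simp only [eval_mul, eval_add, eval_sub, eval_pow, eval_X, eval_C, eval_one, eval_ofNat]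
      exact hx)
  have c11 : S11.ncard ≤ 3 := ncard_le_of_poly (p := X ^ 3 - X ^ 2 - 2) (by compute_degree!)
    (fun x hx => by
      simp only [eval_mul, eval_add, eval_sub, eval_pow, eval_X, eval_C, eval_one, eval_ofNat]
      exact hx)
  have c12 : S12.ncard ≤ 1 := ncard_le_of_poly (p := X - 1) (by compute_degree!)
    (fun x hx => by
      simp only [eval_mul, eval_add, eval_sub, eval_pow, eval_X, eval_C, eval_one, eval_ofNat]
      exact hx)
  have c13 : S13.ncard ≤ 2 := ncard_le_of_poly (p := (C 2) * X ^ 2 + X + 1)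
    (by compute_degree!) (fun x hx => by
      simp only [eval_mul, eval_add, eval_sub, eval_pow, eval_X, eval_C, eval_one, eval_ofNat]
      exact hx)
  have c14 : S14.ncard ≤ 2 := ncard_le_of_poly (p := (C 2) * X ^ 2 - X + 1)
    (by compute_degree!) (fun x hx => by
      simp only [eval_mul, eval_add, eval_sub, eval_pow, eval_X, eval_C, eval_one, eval_ofNat]
      exact hx)
  have c15 : S15.ncard ≤ 1 := ncard_le_of_poly (p := X + 1) (by compute_degree!)
    (fun x hx => by
      simp only [eval_mul, eval_add, eval_sub, eval_pow, eval_X, eval_C, eval_one, eval_ofNat]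
      exact hx)
  have u1 : (S1 ∪ S2).ncard ≤ 4 := (Set.ncard_union_le _ _).trans (by omega)
  have u2 := (Set.ncard_union_le (S1 ∪ S2) S4).trans (Nat.add_le_add u1 c4)
  have u3 := (Set.ncard_union_le _ S5).trans (Nat.add_le_add u2 c5)
  have u4 := (Set.ncard_union_le _ S6).trans (Nat.add_le_add u3 c6)
  have u5 := (Set.ncard_union_le _ S7).trans (Nat.add_le_add u4 c7)
  have u6 := (Set.ncard_union_le _ S8).trans (Nat.add_le_add u5 c8)
  have u7 := (Set.ncard_union_le _ S9).trans (Nat.add_le_add u6 c9)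
  have u8 := (Set.ncard_union_le _ S10).trans (Nat.add_le_add u7 c10)
  have u9 := (Set.ncard_union_le _ S11).trans (Nat.add_le_add u8 c11)
  have u10 := (Set.ncard_union_le _ S12).trans (Nat.add_le_add u9 c12)
  have u11 := (Set.ncard_union_le _ S13).trans (Nat.add_le_add u10 c13)
  have u12 := (Set.ncard_union_le _ S14).trans (Nat.add_le_add u11 c14)
  have u13 := (Set.ncard_union_le _ S15).trans (Nat.add_le_add u12 c15)
  exact le_trans (Set.ncard_le_ncard hsub (Set.toFinite _)) (u13.trans (by norm_num))

lemma toZMod_eq_zero_iff {p : ℕ} [Fact p.Prime] (x : ℤ_[p]) :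
    PadicInt.toZMod x = 0 ↔ ‖x‖ < 1 := by
  rw [← RingHom.mem_ker, PadicInt.ker_toZMod, PadicInt.maximalIdeal_eq_span_p,
    Ideal.mem_span_singleton, ← PadicInt.norm_lt_one_iff_dvd]

lemma exists_lift (ℓ : ℕ) [Fact ℓ.Prime] (hℓ : 317 ≤ ℓ)
    (u : (ZMod ℓ)ˣ) (hu : orderOf u = ℓ - 1) (hg : GoodResidue ℓ (u : ZMod ℓ)) :
    ∃ a : ℤ_[ℓ]ˣ, orderOf a = ℓ - 1 ∧
        GoodResidue ℓ (PadicInt.toZMod ((a : ℤ_[ℓ]))) := by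
  have hp : ℓ.Prime := Fact.out
  set b : ZMod ℓ := (u : ZMod ℓ) with hb
  have hbne : b ≠ 0 := Units.ne_zero u
  set a₀ : ℤ_[ℓ] := ((b.val : ℕ) : ℤ_[ℓ]) with ha₀
  have ht : PadicInt.toZMod a₀ = b := by
    rw [ha₀, map_natCast, ZMod.natCast_val, ZMod.cast_id]
  set F : Polynomial ℤ_[ℓ] := X ^ (ℓ - 1) - 1 with hF
  have hFeval : ∀ x : ℤ_[ℓ], F.eval x = x ^ (ℓ - 1) - 1 := by intro x; simp [hF]
  have hFder : F.derivative = C (((ℓ - 1 : ℕ) : ℤ_[ℓ])) * X ^ (ℓ - 1 - 1) := by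
    simp [hF, derivative_X_pow]
  have hderiv_eval : F.derivative.eval a₀ = ((ℓ - 1 : ℕ) : ℤ_[ℓ]) * a₀ ^ (ℓ - 1 - 1) := by
    rw [hFder]; simp
  have hℓ1 : ((ℓ - 1 : ℕ) : ZMod ℓ) ≠ 0 := by
    rw [Ne, ZMod.natCast_eq_zero_iff]
    intro h
    have := Nat.le_of_dvd (by omega) h
    omega
  have hder_ne : PadicInt.toZMod (F.derivative.eval a₀) ≠ 0 := by
    rw [hderiv_eval, map_mul, map_pow, map_natCast, ht]
    exact mul_ne_zero (by exact_mod_cast hℓ1) (pow_ne_zero _ hbne)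
  have hder_norm : ‖F.derivative.eval a₀‖ = 1 := by
    rcases lt_or_eq_of_le (PadicInt.norm_le_one (F.derivative.eval a₀)) with h | h
    · exact absurd ((toZMod_eq_zero_iff _).mpr h) hder_ne
    · exact h
  have heval_lt : ‖F.eval a₀‖ < 1 := by
    rw [← toZMod_eq_zero_iff]
    rw [hFeval, map_sub, map_pow, map_one, ht]
    rw [ZMod.pow_card_sub_one_eq_one hbne, sub_self]
  have hnorm : ‖F.eval a₀‖ < ‖F.derivative.eval a₀‖ ^ 2 := by
    rw [hder_norm]; simpa using heval_lt
  obtain ⟨z, hz0, hzdist, -, -⟩ := hensels_lemma hnorm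
  rw [coe_aeval_eq_eval, hFeval] at hz0
  have hzpow : z ^ (ℓ - 1) = 1 := by rwa [sub_eq_zero] at hz0
  have hzmod : PadicInt.toZMod z = b := by
    rw [coe_aeval_eq_eval, hder_norm] at hzdist
    have : PadicInt.toZMod (z - a₀) = 0 := (toZMod_eq_zero_iff _).mpr hzdist
    rw [map_sub, ht, sub_eq_zero] at this
    exact this
  have hne : ℓ - 1 ≠ 0 := by omega
  refine ⟨Units.ofPowEqOne z (ℓ - 1) hzpow hne, ?_, ?_⟩
  · have h1 : orderOf (Units.ofPowEqOne z (ℓ - 1) hzpow hne) ∣ ℓ - 1 :=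
      orderOf_dvd_of_pow_eq_one (Units.pow_ofPowEqOne hzpow hne)
    have h2 : ℓ - 1 ∣ orderOf (Units.ofPowEqOne z (ℓ - 1) hzpow hne) := by
      have hmap := orderOf_map_dvd (Units.map (PadicInt.toZMod (p := ℓ)).toMonoidHom)
        (Units.ofPowEqOne z (ℓ - 1) hzpow hne)
      have heq : Units.map (PadicInt.toZMod (p := ℓ)).toMonoidHom
          (Units.ofPowEqOne z (ℓ - 1) hzpow hne) = u := by
        apply Units.ext
        simp [Units.val_ofPowEqOne, hzmod, hb]
      rw [heq, hu] at hmap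
      exact hmap
    exact Nat.dvd_antisymm h1 h2
  · rw [Units.val_ofPowEqOne, hzmod]
    exact hg

lemma exists_good_unit (ℓ : ℕ) [Fact ℓ.Prime] (hℓ : 317 ≤ ℓ) (B : Set (ZMod ℓ)) (hB : B.ncard ≤ 37) :
    ∃ u : (ZMod ℓ)ˣ, orderOf u = ℓ - 1 ∧ (u : ZMod ℓ) ∉ B := by
  classical
  have hcard : Fintype.card (ZMod ℓ)ˣ = ℓ - 1 := ZMod.card_units ℓ
  have hdvd : ℓ - 1 ∣ Fintype.card (ZMod ℓ)ˣ := by rw [hcard]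
  have hcnt : (Finset.filter (fun a : (ZMod ℓ)ˣ => orderOf a = ℓ - 1) Finset.univ).card = (ℓ - 1).totient := by
    have := IsCyclic.card_orderOf_eq_totient hdvd
    convert this using 2
  have h38 : 38 ≤ (ℓ - 1).totient := tot_ge _ (by omega)
  by_contra h
  push_neg at h
  set G : Finset (ZMod ℓ)ˣ := Finset.filter (fun a : (ZMod ℓ)ˣ => orderOf a = ℓ - 1) Finset.univ with hG
  have hsub : ↑(G.image (fun u : (ZMod ℓ)ˣ => (u : ZMod ℓ))) ⊆ B := by
    intro x hx
    simp only [Finset.coe_image, Set.mem_image, Finset.mem_coe] at hx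
    obtain ⟨v, hv, rfl⟩ := hx
    have hv' : orderOf v = ℓ - 1 := by
      simpa [hG] using hv
    exact h v hv'
  have hinj : Function.Injective (fun u : (ZMod ℓ)ˣ => (u : ZMod ℓ)) := fun _ _ h => Units.ext h
  have hcard2 : (G.image (fun u : (ZMod ℓ)ˣ => (u : ZMod ℓ))).card = (ℓ - 1).totient := by
    rw [Finset.card_image_of_injective _ hinj, hG, hcnt]
  have := Set.ncard_le_ncard hsub (Set.toFinite B)
  rw [Set.ncard_coe_finset, hcard2] at this
  omega


theorem stmt_16 (ℓ : ℕ) [Fact ℓ.Prime] (hℓ : 317 ≤ ℓ) :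
    {b : ZMod ℓ | ¬ GoodResidue ℓ b}.ncard ≤ 37 ∧
      ∃ a : ℤ_[ℓ]ˣ, orderOf a = ℓ - 1 ∧
        GoodResidue ℓ (PadicInt.toZMod ((a : ℤ_[ℓ]))) := by
  have hbad := bad_bound ℓ hℓ
  refine ⟨hbad, ?_⟩
  obtain ⟨u, hu, hu'⟩ := exists_good_unit ℓ hℓ _ hbad
  have hg : GoodResidue ℓ (u : ZMod ℓ) := by
    by_contra hc
    exact hu' hc
  exact exists_lift ℓ hℓ u hu hg
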